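/- Let G be a finitely generated group that is nilpotent-by-finite (i.e., G has a nilpotent subgroup N of finite index), and let H be a subgroup of G such that for every g ∈ G there exists a positive integer n with gⁿ ∈ H. Then H has finite index in G. -/

import Mathlib

/-- If `K` is f.g., `H ⊴ K`, the quotient is commutative, and every element of `K` has a
positive power in `H`, then `H` has finite index. -/
private lemma aux_finiteIndex {K : Type*} [Group K] (hfg : Group.FG K) (H : Subgroup K)
    [H.Normal] (hcomm : ∀ a b : K ⧸ H, a * b = b * a)
    (htor : ∀ g : K, ∃ n : ℕ, 0 < n ∧ g ^ n ∈ H) : H.FiniteIndex := by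
  haveI := hfg
  haveI : Group.FG (K ⧸ H) :=
    Group.fg_of_surjective (f := QuotientGroup.mk' H) (QuotientGroup.mk'_surjective H)
  letI : CommGroup (K ⧸ H) :=
    { (inferInstance : Group (K ⧸ H)) with mul_comm := hcomm }
  have htor' : Monoid.IsTorsion (K ⧸ H) := by
    intro x
    obtain ⟨g, rfl⟩ := QuotientGroup.mk_surjective x
    obtain ⟨n, hn, hg⟩ := htor g
    refine isOfFinOrder_iff_pow_eq_one.mpr ⟨n, hn, ?_⟩
    rw [← QuotientGroup.mk_pow, QuotientGroup.eq_one_iff]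
    exact hg
  haveI : Finite (K ⧸ H) := CommGroup.finite_of_fg_torsion (K ⧸ H) htor'
  exact Subgroup.finiteIndex_of_finite_quotient (H := H)

/-- Malcev's theorem for finitely generated nilpotent groups. -/
private lemma malcev_nilpotent :
    ∀ (c : ℕ) {K : Type*} [Group K] (_ : Group.IsNilpotent K),
      Group.nilpotencyClass K ≤ c → Group.FG K →
      ∀ H : Subgroup K, (∀ g : K, ∃ n : ℕ, 0 < n ∧ g ^ n ∈ H) → H.FiniteIndex := by
  intro c
  induction c with
  | zero =>
    intro K _ hnil hc hfg H hH
    haveI := hnil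
    haveI : Subsingleton K :=
      nilpotencyClass_zero_iff_subsingleton.mp (Nat.le_zero.mp hc)
    haveI : Finite K := Finite.of_subsingleton
    exact Subgroup.finiteIndex_of_finite (H := H)
  | succ c ih =>
    intro K _ hnil hc hfg H hH
    haveI := hnil
    haveI := hfg
    set Z := Subgroup.center K with hZ
    set π := QuotientGroup.mk' Z with hπ
    -- the quotient by the center has smaller class
    have hclass : Group.nilpotencyClass (K ⧸ Subgroup.center K) ≤ c := by
      rw [nilpotencyClass_quotient_center]
      omega
    haveI : Group.FG (K ⧸ Z) :=
      Group.fg_of_surjective (f := π) (QuotientGroup.mk'_surjective Z)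
    have hH' : ∀ g : K ⧸ Z, ∃ n : ℕ, 0 < n ∧ g ^ n ∈ H.map π := by
      intro g
      obtain ⟨k, rfl⟩ := QuotientGroup.mk'_surjective Z g
      obtain ⟨n, hn, hk⟩ := hH k
      exact ⟨n, hn, by rw [← map_pow]; exact Subgroup.mem_map_of_mem _ hk⟩
    have hfin' : (H.map π).FiniteIndex := ih inferInstance hclass inferInstance _ hH'
    -- the preimage `M = H ⊔ Z` has finite index in `K`
    set M : Subgroup K := (H.map π).comap π with hM
    have hMsup : M = H ⊔ Z := by
      rw [hM, Subgroup.comap_map_eq, QuotientGroup.ker_mk']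
    have hMindex : M.index ≠ 0 := by
      rw [hM, Subgroup.index_comap_of_surjective _ (QuotientGroup.mk'_surjective Z)]
      exact hfin'.index_ne_zero
    haveI : M.FiniteIndex := ⟨hMindex⟩
    haveI : Group.FG M := Subgroup.fg_of_index_ne_zero M
    have hHle : H ≤ M := hMsup ▸ le_sup_left
    have hZle : Z ≤ M := hMsup ▸ le_sup_right
    -- every element of `M` is `h * z` with `h ∈ H`, `z ∈ Z`
    have hdecomp : ∀ m : M, ∃ h ∈ H, ∃ z ∈ Z, (m : K) = h * z := by
      intro m
      have hmem : (m : K) ∈ (↑(H ⊔ Z) : Set K) := hMsup ▸ m.2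
      rw [Subgroup.mul_normal H Z] at hmem
      obtain ⟨h, hh, z, hz, hhz⟩ := hmem
      exact ⟨h, hh, z, hz, hhz.symm⟩
    -- `H` viewed inside `M` is normal
    haveI hnormal : (H.subgroupOf M).Normal := by
      constructor
      intro x hx m
      rw [Subgroup.mem_subgroupOf] at hx ⊢
      obtain ⟨h, hh, z, hz, hm⟩ := hdecomp m
      have hzc : ∀ g : K, g * z = z * g := Subgroup.mem_center_iff.mp hz
      have : ((m * x * m⁻¹ : M) : K) = h * (x : K) * h⁻¹ := by
        push_cast
        rw [hm, mul_inv_rev]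
        have hxz : z * (x : K) * z⁻¹ = (x : K) := by
          rw [← hzc (x : K)]; group
        calc h * z * (x : K) * (z⁻¹ * h⁻¹) = h * (z * (x : K) * z⁻¹) * h⁻¹ := by group
          _ = h * (x : K) * h⁻¹ := by rw [hxz]
      rw [this]
      exact H.mul_mem (H.mul_mem hh hx) (H.inv_mem hh)
    -- the quotient `M ⧸ H` is commutative
    have hcomm : ∀ a b : M ⧸ H.subgroupOf M, a * b = b * a := by
      have hrep : ∀ m : M, ∃ z : M, (z : K) ∈ Z ∧
          (QuotientGroup.mk z : M ⧸ H.subgroupOf M) = QuotientGroup.mk m := by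
        intro m
        obtain ⟨h, hh, z, hz, hm⟩ := hdecomp m
        have hzc : ∀ g : K, g * z = z * g := Subgroup.mem_center_iff.mp hz
        refine ⟨⟨z, hZle hz⟩, hz, ?_⟩
        rw [QuotientGroup.eq]
        rw [Subgroup.mem_subgroupOf]
        have : (((⟨z, hZle hz⟩ : M)⁻¹ * m : M) : K) = h := by
          push_cast
          rw [hm, hzc h]
          group
        rw [this]
        exact hh
      intro a b
      obtain ⟨m₁, rfl⟩ := QuotientGroup.mk_surjective a
      obtain ⟨m₂, rfl⟩ := QuotientGroup.mk_surjective b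
      obtain ⟨z₁, hz₁, he₁⟩ := hrep m₁
      obtain ⟨z₂, hz₂, he₂⟩ := hrep m₂
      rw [← he₁, ← he₂, ← QuotientGroup.mk_mul, ← QuotientGroup.mk_mul]
      congr 1
      exact Subtype.ext (by push_cast; exact Subgroup.mem_center_iff.mp hz₂ (z₁ : K))
    -- torsion condition inside `M`
    have htor : ∀ m : M, ∃ n : ℕ, 0 < n ∧ m ^ n ∈ H.subgroupOf M := by
      intro m
      obtain ⟨n, hn, hmn⟩ := hH (m : K)
      exact ⟨n, hn, by rw [Subgroup.mem_subgroupOf]; push_cast; exact hmn⟩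
    have hfinM : (H.subgroupOf M).FiniteIndex :=
      aux_finiteIndex inferInstance (H.subgroupOf M) hcomm htor
    refine ⟨?_⟩
    rw [← Subgroup.relIndex_mul_index hHle]
    exact Nat.mul_ne_zero hfinM.index_ne_zero hMindex

/-- (Malcev) If `G` is a finitely generated nilpotent-by-finite group and `H ≤ G` is a
subgroup such that every element of `G` has a positive power lying in `H`, then `H` has
finite index in `G`. -/
theorem finiteIndex_of_pow_mem
    {G : Type*} [Group G] (hfg : Group.FG G)
    (N : Subgroup G) (hN : Group.IsNilpotent N) (hNfi : N.FiniteIndex)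
    (H : Subgroup G) (hH : ∀ g : G, ∃ n : ℕ, 0 < n ∧ g ^ n ∈ H) :
    H.FiniteIndex := by
  haveI := hfg
  haveI := hNfi
  haveI : Group.FG N := Subgroup.fg_of_index_ne_zero N
  have htor : ∀ g : N, ∃ n : ℕ, 0 < n ∧ g ^ n ∈ H.subgroupOf N := by
    intro g
    obtain ⟨n, hn, hgn⟩ := hH (g : G)
    exact ⟨n, hn, by rw [Subgroup.mem_subgroupOf]; push_cast; exact hgn⟩
  haveI := hN
  have hfinN : (H.subgroupOf N).FiniteIndex :=
    malcev_nilpotent (Group.nilpotencyClass N) hN le_rfl inferInstance _ htor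
  have h1 : (H ⊓ N).relIndex N ≠ 0 := by
    rw [Subgroup.inf_relIndex_right]
    exact hfinN.index_ne_zero
  have h2 : (H ⊓ N).index ≠ 0 := by
    rw [← Subgroup.relIndex_mul_index (inf_le_right : H ⊓ N ≤ N)]
    exact Nat.mul_ne_zero h1 hNfi.index_ne_zero
  exact ⟨fun h => h2 (Nat.eq_zero_of_zero_dvd (h ▸ Subgroup.index_dvd_of_le inf_le_left))⟩
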